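/- arXiv:2212.06020 — 2 statements merged into one kernel-verified Lean document; each statement's English description precedes it below -/
import Mathlib

section
/- Any group G belonging to the class C' contains a subgroup isomorphic to ℤ × ℤ/2ℤ. -/
/-- An involution of a group is an element of order 2. -/
def IsInvolution {G : Type*} [Monoid G] (g : G) : Prop := orderOf g = 2

/-- A group `G` acts sharply 2-transitively on `X` if `X` has at least two elements and
any pair of distinct points of `X` is sent to any other such pair by a unique element of `G`. -/
def SharplyTwoTransitive (G X : Type*) [Group G] [MulAction G X] : Prop :=
  Nontrivial X ∧ ∀ x₁ x₂ y₁ y₂ : X, x₁ ≠ x₂ → y₁ ≠ y₂ →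
    ∃! g : G, g • x₁ = y₁ ∧ g • x₂ = y₂
/-- A subgroup `D ≤ G` is malnormal if `D ∩ gDg⁻¹` is trivial for every `g ∉ D`. -/
def IsMalnormal {G : Type*} [Group G] (D : Subgroup G) : Prop :=
  ∀ g : G, g ∉ D → ∀ x : G, x ∈ D → g * x * g⁻¹ ∈ D → x = 1

/-- A subgroup `D ≤ G` is quasi-malnormal if `D ∩ gDg⁻¹` has at most 2 elements
for every `g ∉ D`. -/
def IsQuasiMalnormal {G : Type*} [Group G] (D : Subgroup G) : Prop :=
  ∀ g : G, g ∉ D → {x : G | x ∈ D ∧ g * x * g⁻¹ ∈ D}.encard ≤ 2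
/-- `AddAut A` as multiplicative automorphisms of `Multiplicative A`. -/
def addAutToMulAut (A : Type*) [AddGroup A] : Multiplicative (AddAut A) →* MulAut (Multiplicative A) where
  toFun f := AddEquiv.toMultiplicative f.toAdd
  map_one' := rfl
  map_mul' _ _ := rfl

/-- The action of `ℤˣ = {±1} ≃ ℤ/2ℤ` on `ℚ` by multiplication (i.e. the nontrivial element
acts by negation), as automorphisms of the additive group `ℚ` written multiplicatively. -/
def dqAut : ℤˣ →* MulAut (Multiplicative ℚ) :=
  (addAutToMulAut ℚ).comp (DistribMulAction.toAddAut ℤˣ ℚ)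

/-- The group `D_ℚ = ℚ ⋊ ℤ/2ℤ`, where `ℤ/2ℤ` acts by negation. -/
abbrev DQ : Type := SemidirectProduct (Multiplicative ℚ) ℤˣ dqAut
/-- A pair of distinct involutions `(u, v)` has type `D_ℤ` if `⟨u, v⟩` is contained in a
quasi-malnormal subgroup of `G` isomorphic to the infinite dihedral group
`D_ℤ = ℤ ⋊ ℤ/2ℤ` (which is `DihedralGroup 0` in Mathlib). -/
def PairTypeDZ {G : Type*} [Group G] (u v : G) : Prop :=
  ∃ D : Subgroup G, Subgroup.closure {u, v} ≤ D ∧ IsQuasiMalnormal D ∧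
    Nonempty (D ≃* DihedralGroup 0)

/-- A pair of distinct involutions `(u, v)` has type `D_ℚ` if `⟨u, v⟩` is contained in a
subgroup of `G` isomorphic to `D_ℚ = ℚ ⋊ ℤ/2ℤ`. -/
def PairTypeDQ {G : Type*} [Group G] (u v : G) : Prop :=
  ∃ D : Subgroup G, Subgroup.closure {u, v} ≤ D ∧ Nonempty (D ≃* DQ)

/-- The class `𝒞`: (1) `G` acts by conjugation transitively on its involutions and freely on
ordered pairs of distinct involutions; (2) every pair of distinct involutions has type `D_ℤ`
or type `D_ℚ`; (3) there is a pair of type `D_ℚ`, and `G` acts transitively (by conjugation)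
on the set of pairs of type `D_ℚ`. -/
def ClassC (G : Type*) [Group G] : Prop :=
  (∀ u v : G, IsInvolution u → IsInvolution v → ∃ g : G, g * u * g⁻¹ = v) ∧
  (∀ u v g : G, IsInvolution u → IsInvolution v → u ≠ v →
      g * u * g⁻¹ = u → g * v * g⁻¹ = v → g = 1) ∧
  (∀ u v : G, IsInvolution u → IsInvolution v → u ≠ v → PairTypeDZ u v ∨ PairTypeDQ u v) ∧
  (∃ u v : G, IsInvolution u ∧ IsInvolution v ∧ u ≠ v ∧ PairTypeDQ u v) ∧
  (∀ u v u' v' : G, IsInvolution u → IsInvolution v → u ≠ v → PairTypeDQ u v →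
      IsInvolution u' → IsInvolution v' → u' ≠ v' → PairTypeDQ u' v' →
      ∃ g : G, g * u * g⁻¹ = u' ∧ g * v * g⁻¹ = v')

/-- A translation is an element of infinite order which is a product of two
distinct involutions. -/
def IsTranslation {G : Type*} [Group G] (h : G) : Prop :=
  orderOf h = 0 ∧ ∃ u v : G, IsInvolution u ∧ IsInvolution v ∧ u ≠ v ∧ h = u * v

/-- A homothety is an element of infinite order centralizing some involution. -/
def IsHomothety {G : Type*} [Group G] (h : G) : Prop :=
  orderOf h = 0 ∧ ∃ u : G, IsInvolution u ∧ h * u = u * h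

/-- An element is isolated if it has infinite order and lies in a malnormal infinite
cyclic subgroup. -/
def IsIsolated {G : Type*} [Group G] (h : G) : Prop :=
  orderOf h = 0 ∧ ∃ Z : Subgroup G, h ∈ Z ∧ IsMalnormal Z ∧ IsCyclic Z ∧ Infinite Z

/-- The 3-type condition: every element has order 1, 2 or infinite, and every element of
infinite order is a translation, a homothety, or isolated. -/
def ThreeTypeCondition (G : Type*) [Group G] : Prop :=
  (∀ g : G, orderOf g = 1 ∨ orderOf g = 2 ∨ orderOf g = 0) ∧
  (∀ g : G, orderOf g = 0 → IsTranslation g ∨ IsHomothety g ∨ IsIsolated g)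

/-- The class `𝒞'`: groups in `𝒞` satisfying the 3-type condition. -/
def ClassC' (G : Type*) [Group G] : Prop := ClassC G ∧ ThreeTypeCondition G


lemma zmod2cases : ∀ x : ZMod 2, x = 0 ∨ x = 1 := by decide

lemma dq_refl_orderOf (q : Multiplicative ℚ) : orderOf (⟨q, -1⟩ : DQ) = 2 := by
  have : Fact (Nat.Prime 2) := ⟨Nat.prime_two⟩
  apply orderOf_eq_prime
  · rw [pow_two]
    ext
    · change Multiplicative.toAdd q + ((-1 : ℤˣ) • Multiplicative.toAdd q) = 0
      simp [Units.smul_def]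
    · rw [SemidirectProduct.mul_right]; simp
  · intro h
    have := congrArg SemidirectProduct.right h
    simp at this

lemma exists_sub_aux {G : Type*} [Group G] (g u : G) (hg : orderOf g = 0)
    (hu : orderOf u = 2) (hc : g * u = u * g) :
    ∃ H : Subgroup G, Nonempty (H ≃* Multiplicative ℤ × Multiplicative (ZMod 2)) := by
  have hu2 : u ^ 2 = 1 := by rw [← hu]; exact pow_orderOf_eq_one u
  have hune : u ≠ 1 := by intro h; rw [h, orderOf_one] at hu; omega
  have hcom : Commute g u := hc
  set φ : Multiplicative ℤ × Multiplicative (ZMod 2) →* G :=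
    { toFun := fun p => g ^ p.1.toAdd * u ^ (p.2.toAdd.val)
      map_one' := by simp
      map_mul' := by
        rintro ⟨a, x⟩ ⟨b, y⟩
        have h1 : u ^ ((x.toAdd + y.toAdd).val) = u ^ (x.toAdd.val + y.toAdd.val) := by
          rw [ZMod.val_add]
          conv_rhs => rw [← pow_mod_orderOf, hu]
        have h2 : Commute (u ^ x.toAdd.val) (g ^ b.toAdd) :=
          ((hcom.symm).pow_left _).zpow_right _
        show g ^ (a.toAdd + b.toAdd) * u ^ ((x.toAdd + y.toAdd).val) = _
        rw [zpow_add, h1, pow_add]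
        exact (h2.mul_mul_mul_comm _ _).symm } with hφ
  have hinj : Function.Injective φ := by
    rw [injective_iff_map_eq_one]
    rintro ⟨a, x⟩ h
    have h' : g ^ a.toAdd * u ^ (x.toAdd.val) = 1 := h
    have ha0 : a.toAdd = 0 ∧ x.toAdd = 0 := by
      rcases zmod2cases x.toAdd with hx | hx
      · rw [hx] at h'
        simp only [ZMod.val_zero, pow_zero, mul_one] at h'
        have h2 := orderOf_dvd_iff_zpow_eq_one.mpr h'
        rw [hg] at h2
        exact ⟨by exact_mod_cast (zero_dvd_iff.mp (by exact_mod_cast h2)), hx⟩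
      · exfalso
        rw [hx, ZMod.val_one, pow_one] at h'
        have hgu : g ^ a.toAdd = u⁻¹ := mul_eq_one_iff_eq_inv.mp h'
        have hsq : g ^ (2 * a.toAdd) = 1 := by
          rw [two_mul, zpow_add, hgu, ← mul_inv_rev, ← pow_two, hu2, inv_one]
        have h2 := orderOf_dvd_iff_zpow_eq_one.mpr hsq
        rw [hg] at h2
        have h3 : (2 : ℤ) * a.toAdd = 0 := zero_dvd_iff.mp (by exact_mod_cast h2)
        have h4 : a.toAdd = 0 := by omega
        rw [h4, zpow_zero] at hgu
        exact hune (by rw [← inv_inv u, ← hgu, inv_one])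
    have h5 : a = 1 := by rw [← toAdd_eq_zero]; exact ha0.1
    have h6 : x = 1 := by rw [← toAdd_eq_zero]; exact ha0.2
    rw [h5, h6]; rfl
  exact ⟨φ.range, ⟨(MonoidHom.ofInjective hinj).symm⟩⟩

lemma nocomm_aux {G : Type*} [Group G] (hC : ClassC G) (x y : G)
    (hx : IsInvolution x) (hy : IsInvolution y) (hxy : x ≠ y) (hcomm : x * y = y * x) :
    False := by
  have hx2 : x * x = 1 := by
    have h := pow_orderOf_eq_one x; rw [hx, pow_two] at h; exact h
  have hy2 : y * y = 1 := by
    have h := pow_orderOf_eq_one y; rw [hy, pow_two] at h; exact h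
  have hxi : x⁻¹ = x := inv_eq_of_mul_eq_one_right hx2
  have hyi : y⁻¹ = y := inv_eq_of_mul_eq_one_right hy2
  have hinv : (x*y)⁻¹ = y*x := by rw [mul_inv_rev, hxi, hyi]
  have key : y*x*(y*x) = 1 := by
    calc y*x*(y*x) = y*(x*y)*x := by group
    _ = y*(y*x)*x := by rw [hcomm]
    _ = (y*y)*(x*x) := by group
    _ = 1 := by rw [hx2, hy2, one_mul]
  have fixx : (x*y) * x * (x*y)⁻¹ = x := by
    rw [hinv]
    calc x*y*x*(y*x) = x*(y*x*(y*x)) := by group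
    _ = x := by rw [key, mul_one]
  have fixy : (x*y) * y * (x*y)⁻¹ = y := by
    rw [hinv]
    calc x*y*y*(y*x) = x*((y*y)*(y*x)) := by group
    _ = x*(y*x) := by rw [hy2, one_mul]
    _ = x*(x*y) := by rw [hcomm]
    _ = (x*x)*y := by group
    _ = y := by rw [hx2, one_mul]
  have h1 := hC.2.1 x y (x*y) hx hy hxy fixx fixy
  have : y = x := by
    have := mul_eq_one_iff_eq_inv.mp h1
    rw [hyi] at this
    exact this.symm
  exact hxy this.symm

/-- Any group of the class `𝒞'` contains a subgroup isomorphic to `ℤ × ℤ/2ℤ`. -/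
theorem stmt_14 {G : Type*} [Group G] (hC : ClassC' G) :
    ∃ H : Subgroup G, Nonempty (H ≃* Multiplicative ℤ × Multiplicative (ZMod 2)) := by
  classical
  obtain ⟨hCC, hT1, hT2⟩ := hC
  obtain ⟨u, v, hu, hv, huv, D, hDle, ⟨e⟩⟩ := hCC.2.2.2.1
  have huD : u ∈ D := hDle (Subgroup.subset_closure (by simp))
  have hvD : v ∈ D := hDle (Subgroup.subset_closure (by simp))
  set W : ℚ → G := fun q => ((e.symm ⟨Multiplicative.ofAdd q, -1⟩ : D) : G) with hW
  have hWinv : ∀ q, IsInvolution (W q) := by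
    intro q
    show orderOf ((e.symm ⟨Multiplicative.ofAdd q, -1⟩ : D) : G) = 2
    rw [Subgroup.orderOf_coe]
    exact (orderOf_injective e.symm.toMonoidHom e.symm.injective _).trans
      (dq_refl_orderOf _)
  have hWD : ∀ q, W q ∈ D := fun q => (e.symm _).2
  have hWinj : Function.Injective W := by
    intro q r h
    have h1 : (e.symm ⟨Multiplicative.ofAdd q, -1⟩ : D)
        = e.symm ⟨Multiplicative.ofAdd r, -1⟩ := Subtype.coe_injective h
    have h2 := e.symm.injective h1
    have h3 := congrArg SemidirectProduct.left h2
    exact Multiplicative.ofAdd.injective h3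
  set c := u * v * u⁻¹ with hc
  have hpick : ∃ q ∈ ({0,1,2,3} : Finset ℚ), W q ∉ ({u, v, c} : Finset G) := by
    by_contra hcon
    push_neg at hcon
    have hsub : Finset.image W {0,1,2,3} ⊆ {u,v,c} := by
      intro x hx
      simp only [Finset.mem_image] at hx
      obtain ⟨q, hq, rfl⟩ := hx
      exact hcon q hq
    have hcard := Finset.card_le_card hsub
    rw [Finset.card_image_of_injective _ hWinj] at hcard
    have h4' : ({0,1,2,3} : Finset ℚ).card = 4 := by decide
    have hA := Finset.card_insert_le u ({v, c} : Finset G)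
    have hB := Finset.card_insert_le v ({c} : Finset G)
    rw [Finset.card_singleton] at hB
    omega
  obtain ⟨q, _, hq⟩ := hpick
  simp only [Finset.mem_insert, Finset.mem_singleton, not_or] at hq
  obtain ⟨hwu, hwv, hwc⟩ := hq
  set w := W q with hwdef
  have hwinv : IsInvolution w := hWinv q
  have hwD : w ∈ D := hWD q
  have hpuv : PairTypeDQ u v := ⟨D, hDle, ⟨e⟩⟩
  have hpuw : PairTypeDQ u w := by
    refine ⟨D, ?_, ⟨e⟩⟩
    rw [Subgroup.closure_le]
    rw [Set.insert_subset_iff]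
    exact ⟨huD, Set.singleton_subset_iff.mpr hwD⟩
  obtain ⟨g, hgu, hgv⟩ :=
    hCC.2.2.2.2 u v u w hu hv huv hpuv hu hwinv (Ne.symm hwu) hpuw
  have hgne1 : g ≠ 1 := by
    rintro rfl
    simp only [one_mul, inv_one, mul_one] at hgv
    exact hwv hgv.symm
  have hcomm_gu : g * u = u * g := mul_inv_eq_iff_eq_mul.mp hgu
  rcases hT1 g with h | h | h
  · exact absurd (orderOf_eq_one_iff.mp h) hgne1
  · exfalso
    by_cases hgu' : g = u
    · subst hgu'
      exact hwc (hgv.symm.trans hc.symm)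
    · exact nocomm_aux hCC g u h hu hgu' hcomm_gu
  · exact exists_sub_aux g u h hu hcomm_gu
end

section
/- Let G be a group acting sharply 2-transitively on a set X with the action of characteristic 0. Then for any two distinct involutions u, v of G, the subgroup ⟨u,v⟩ is contained in a subgroup of G isomorphic to D_ℚ = ℚ ⋊ ℤ/2ℤ. More precisely, there is an increasing chain of subgroups D₁ ⊆ D₂ ⊆ D₃ ⊆ … of G with D₁ = ⟨u,v⟩, each Dₙ isomorphic to the infinite dihedral group, and Dₙ₋₁ of index n in Dₙ for every n ≥ 2. -/
/-- The action has characteristic 0: some involution has a fixed point, and the product of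
any two distinct involutions has infinite order. -/
def ActionCharZero (G X : Type*) [Group G] [MulAction G X] : Prop :=
  (∃ (u : G) (x : X), IsInvolution u ∧ u • x = x) ∧
  ∀ u v : G, IsInvolution u → IsInvolution v → u ≠ v → orderOf (u * v) = 0
namespace Stmt15Aux

open Subgroup

/-! ### Elementary involution lemmas -/

section Invol
variable {G : Type*} [Group G]

theorem inv_sq {u : G} (hu : IsInvolution u) : u * u = 1 := by
  have h := pow_orderOf_eq_one u
  rw [hu, pow_two] at h
  exact h

theorem inv_ne_one {u : G} (hu : IsInvolution u) : u ≠ 1 := by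
  intro h
  rw [IsInvolution, h, orderOf_one] at hu
  omega

theorem inv_inv_eq {u : G} (hu : IsInvolution u) : u⁻¹ = u :=
  inv_eq_of_mul_eq_one_right (inv_sq hu)

theorem isInv_of {u : G} (h1 : u * u = 1) (h2 : u ≠ 1) : IsInvolution u :=
  orderOf_eq_prime (by rwa [pow_two]) h2

theorem isInv_conj {c w : G} (hw : IsInvolution w) : IsInvolution (c * w * c⁻¹) := by
  unfold IsInvolution
  have h : orderOf ((MulAut.conj c) w) = orderOf w :=
    orderOf_injective (MulAut.conj c).toMonoidHom (MulAut.conj c).injective w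
  rw [← MulAut.conj_apply, h]
  exact hw

theorem conj_zpow_of {u t : G} (hu2 : u * u = 1) (hut : u * t * u = t⁻¹) (z : ℤ) :
    u * t ^ z * u = t ^ (-z) := by
  have h1 : u⁻¹ = u := inv_eq_of_mul_eq_one_right hu2
  calc u * t ^ z * u = (MulAut.conj u) (t ^ z) := by rw [MulAut.conj_apply, h1]
    _ = ((MulAut.conj u) t) ^ z := map_zpow _ _ _
    _ = (t⁻¹) ^ z := by rw [MulAut.conj_apply, h1, hut]
    _ = t ^ (-z) := by rw [inv_zpow, zpow_neg]

theorem conj_pow_of {u t : G} (hu2 : u * u = 1) (hut : u * t * u = t⁻¹) (m : ℕ) :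
    u * t ^ m * u = (t ^ m)⁻¹ := by
  have := conj_zpow_of hu2 hut (m : ℤ)
  rwa [zpow_natCast, zpow_neg, zpow_natCast] at this

theorem zpow_eq_one_iff0 {t : G} (ht0 : orderOf t = 0) {z : ℤ} : t ^ z = 1 ↔ z = 0 := by
  rw [← orderOf_dvd_iff_zpow_eq_one, ht0]
  simp

theorem zpow_inj_of {t : G} (ht0 : orderOf t = 0) {a b : ℤ} (h : t ^ a = t ^ b) : a = b := by
  have : t ^ (a - b) = 1 := by
    rw [zpow_sub, h, mul_inv_cancel]
  have := (zpow_eq_one_iff0 ht0).mp this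
  omega

theorem ne_zpow_of {u t : G} (hu2 : u * u = 1) (hu1 : u ≠ 1) (ht0 : orderOf t = 0)
    (z : ℤ) : u ≠ t ^ z := by
  intro h
  have h2 : t ^ (z + z) = 1 := by rw [zpow_add, ← h, hu2]
  have := (zpow_eq_one_iff0 ht0).mp h2
  have hz : z = 0 := by omega
  rw [hz, zpow_zero] at h
  exact hu1 h

theorem conj_pow' {G : Type*} [Group G] (c t : G) (n : ℕ) :
    (c * t * c⁻¹) ^ n = c * t ^ n * c⁻¹ := by
  have h := map_pow (MulAut.conj c) t n
  simp only [MulAut.conj_apply] at h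
  exact h.symm

theorem conj_ut {u w : G} (hu2 : u * u = 1) (hw2 : w * w = 1) :
    u * (u * w) * u = (u * w)⁻¹ := by
  have h1 : u⁻¹ = u := inv_eq_of_mul_eq_one_right hu2
  have h2 : w⁻¹ = w := inv_eq_of_mul_eq_one_right hw2
  have h3 : u * (u * w) = w := by rw [← mul_assoc, hu2, one_mul]
  rw [h3, mul_inv_rev, h1, h2]

end Invol

/-! ### Sharply 2-transitive action lemmas -/

section Action
variable {G X : Type*} [Group G] [MulAction G X]

theorem unique_g (h2t : SharplyTwoTransitive G X) {x y : X} (hxy : x ≠ y)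
    {g g' : G} (h1 : g • x = g' • x) (h2 : g • y = g' • y) : g = g' := by
  have hne : g' • x ≠ g' • y := fun hh => hxy ((smul_left_cancel_iff g').mp hh)
  obtain ⟨c, -, hcu⟩ := h2t.2 x y (g' • x) (g' • y) hxy hne
  have e1 := hcu g ⟨h1, h2⟩
  have e2 := hcu g' ⟨rfl, rfl⟩
  rw [e1, e2]

theorem eq_one_of_fix2 (h2t : SharplyTwoTransitive G X) {x y : X} (hxy : x ≠ y)
    {g : G} (h1 : g • x = x) (h2 : g • y = y) : g = 1 := by
  apply unique_g h2t hxy (g' := 1) <;> simp [h1, h2]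

theorem exists_moved (h2t : SharplyTwoTransitive G X) {g : G} (hg : g ≠ 1) :
    ∃ x : X, g • x ≠ x := by
  by_contra h
  push_neg at h
  obtain ⟨a, b, hab⟩ := h2t.1
  exact hg (eq_one_of_fix2 h2t hab (h a) (h b))

theorem fix_eq (h2t : SharplyTwoTransitive G X) {g : G} (hg : g ≠ 1) {p q : X}
    (hp : g • p = p) (hq : g • q = q) : p = q := by
  by_contra h
  exact hg (eq_one_of_fix2 h2t h hp hq)

theorem exists_fix (h2t : SharplyTwoTransitive G X) (hchar : ActionCharZero G X)
    {u : G} (hu : IsInvolution u) : ∃ p : X, u • p = p := by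
  obtain ⟨i, x₀, hi, hix₀⟩ := hchar.1
  obtain ⟨z, hz⟩ := exists_moved h2t (inv_ne_one hi)
  obtain ⟨x, hx⟩ := exists_moved h2t (inv_ne_one hu)
  obtain ⟨c, hc1, hc2⟩ := (h2t.2 z (i • z) x (u • x) (Ne.symm hz) (Ne.symm hx)).exists
  have hiz : i • (i • z) = z := by rw [← mul_smul, inv_sq hi, one_smul]
  have hux : u • (u • x) = x := by rw [← mul_smul, inv_sq hu, one_smul]
  have hconj : (c * i * c⁻¹) = u := by
    apply unique_g h2t (Ne.symm hx) (g' := u)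
    · rw [mul_smul, mul_smul, inv_smul_eq_iff.mpr hc1.symm, hc2]
    · have hcinv : c⁻¹ • (u • x) = i • z := inv_smul_eq_iff.mpr hc2.symm
      rw [mul_smul, mul_smul, hcinv, hiz, hc1, hux]
  refine ⟨c • x₀, ?_⟩
  calc u • c • x₀ = (c * i * c⁻¹) • (c • x₀) := by rw [hconj]
    _ = c • (i • x₀) := by
        rw [mul_smul, mul_smul, inv_smul_smul]
    _ = c • x₀ := by rw [hix₀]

/-- Two involutions with a common fixed point are equal (uses characteristic 0). -/
theorem invol_eq_of_fix_eq (h2t : SharplyTwoTransitive G X) (hchar : ActionCharZero G X)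
    {u j : G} (hu : IsInvolution u) (hj : IsInvolution j)
    {p : X} (hup : u • p = p) (hjp : j • p = p) : u = j := by
  by_contra hne
  -- a point different from p
  obtain ⟨a, b, hab⟩ := h2t.1
  have hxex : ∃ x : X, x ≠ p := by
    rcases eq_or_ne a p with h | h
    · exact ⟨b, by rw [h] at hab; exact Ne.symm hab⟩
    · exact ⟨a, h⟩
  obtain ⟨x, hxp⟩ := hxex
  have hfixu : ∀ y : X, u • y = y → y = p := fun y hy => fix_eq h2t (inv_ne_one hu) hy hup
  have hux : u • x ≠ x := fun h => hxp (hfixu x h)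
  have hjxp : j • x ≠ p := by
    intro h
    apply hxp
    have : j • (j • x) = j • p := by rw [h]
    rw [← mul_smul, inv_sq hj, one_smul, hjp] at this
    exact this
  have hujx : u • (j • x) ≠ j • x := fun h => hjxp (hfixu _ h)
  obtain ⟨c, hc1, hc2⟩ :=
    (h2t.2 x (u • x) (j • x) (u • (j • x)) (Ne.symm hux) (Ne.symm hujx)).exists
  have huu : ∀ y : X, u • (u • y) = y := fun y => by
    rw [← mul_smul, inv_sq hu, one_smul]
  -- c commutes with u
  have hcu : c * u = u * c := by
    apply unique_g h2t (Ne.symm hux)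
    · rw [mul_smul, mul_smul, hc1, hc2]
    · rw [mul_smul, mul_smul, huu, hc1, hc2, huu]
  -- c fixes p
  have hcp : c • p = p := by
    have h1 : u • (c • p) = c • p := by
      calc u • c • p = (u * c) • p := (mul_smul _ _ _).symm
        _ = (c * u) • p := by rw [hcu]
        _ = c • (u • p) := mul_smul _ _ _
        _ = c • p := by rw [hup]
    exact hfixu _ h1
  -- c = j
  have hcj : c = j := by
    apply unique_g h2t (Ne.symm hxp)
    · rw [hcp, hjp]
    · rw [hc1]
  have hcomm : j * u = u * j := by rw [← hcj]; exact hcu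
  have h1 : (u * j) * (u * j) = 1 := by
    have hstep : j * (u * j) = u * (j * j) := by rw [← mul_assoc, hcomm, mul_assoc]
    calc (u * j) * (u * j) = u * (j * (u * j)) := by rw [mul_assoc]
      _ = u * (u * (j * j)) := by rw [hstep]
      _ = u * (u * 1) := by rw [inv_sq hj]
      _ = 1 := by rw [mul_one, inv_sq hu]
  have hne2 : u * j ≠ 1 := by
    intro h
    have := inv_eq_of_mul_eq_one_right h
    rw [inv_inv_eq hu] at this
    exact hne this
  have hord : orderOf (u * j) = 2 := orderOf_eq_prime (by rwa [pow_two]) hne2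
  have hneuj : u ≠ u * j := by
    intro h
    have : u * 1 = u * j := by rw [mul_one]; exact h
    exact inv_ne_one hj (mul_left_cancel this).symm
  have h0 := hchar.2 u (u * j) hu (isInv_of h1 hne2) hneuj
  rw [← mul_assoc, inv_sq hu, one_mul] at h0
  rw [IsInvolution] at hj
  omega

/-- The root lemma: `u * v` has `n`-th roots of the form `u * w` with `w` an involution. -/
theorem exists_root (h2t : SharplyTwoTransitive G X) (hchar : ActionCharZero G X)
    {u v : G} (hu : IsInvolution u) (hv : IsInvolution v) (huv : u ≠ v)
    {n : ℕ} (hn : 1 ≤ n) :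
    ∃ w : G, IsInvolution w ∧ w ≠ u ∧ (u * w) ^ n = u * v := by
  set t := u * v with htdef
  have ht0 : orderOf t = 0 := hchar.2 u v hu hv huv
  have hutu : u * t * u = t⁻¹ := by
    rw [htdef, mul_inv_rev, inv_inv_eq hu, inv_inv_eq hv, ← mul_assoc u u v,
      inv_sq hu, one_mul]
  set j := u * t ^ n with hjdef
  have hjj : j * j = 1 := by
    calc j * j = (u * t ^ n * u) * t ^ n := by
          rw [hjdef]; rw [mul_assoc, ← mul_assoc u (t ^ n) (u * t ^ n), ← mul_assoc]
      _ = (t ^ n)⁻¹ * t ^ n := by rw [conj_pow_of (inv_sq hu) hutu]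
      _ = 1 := inv_mul_cancel _
  have hpow_ne : t ^ n ≠ 1 := by
    intro h
    have := orderOf_dvd_of_pow_eq_one h
    rw [ht0] at this
    omega
  have hjne1 : j ≠ 1 := by
    intro h
    have h2 := congrArg (fun g => u * g) h
    rw [hjdef, ← mul_assoc, inv_sq hu, one_mul, mul_one] at h2
    have h3 : t ^ (n + n) = 1 := by rw [pow_add, h2, inv_sq hu]
    have h4 := orderOf_dvd_of_pow_eq_one h3
    rw [ht0] at h4
    omega
  have hjneu : j ≠ u := by
    intro h
    apply hpow_ne
    have h2 := congrArg (fun g => u * g) h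
    rw [hjdef, ← mul_assoc, inv_sq hu, one_mul] at h2
    exact h2
  have hjinv : IsInvolution j := isInv_of hjj hjne1
  obtain ⟨p, hp⟩ := exists_fix h2t hchar hu
  obtain ⟨q, hq⟩ := exists_fix h2t hchar hv
  obtain ⟨r, hr⟩ := exists_fix h2t hchar hjinv
  have hpq : p ≠ q := by
    intro h
    exact huv (invol_eq_of_fix_eq h2t hchar hu hv hp (h ▸ hq))
  have hpr : p ≠ r := by
    intro h
    exact hjneu (invol_eq_of_fix_eq h2t hchar hu hjinv (h ▸ hp) hr).symm
  obtain ⟨c, hc1, hc2⟩ := (h2t.2 p r p q hpr hpq).exists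
  have hcinvp : c⁻¹ • p = p := inv_smul_eq_iff.mpr hc1.symm
  have hcu : c * u * c⁻¹ = u := by
    apply invol_eq_of_fix_eq h2t hchar (isInv_conj hu) hu _ hp
    rw [mul_smul, mul_smul, hcinvp, hp, hc1]
  have hcj : c * j * c⁻¹ = v := by
    apply invol_eq_of_fix_eq h2t hchar (isInv_conj hjinv) hv _ hq
    have hcinvq : c⁻¹ • q = r := inv_smul_eq_iff.mpr hc2.symm
    rw [mul_smul, mul_smul, hcinvq, hr, hc2]
  refine ⟨c * v * c⁻¹, isInv_conj hv, ?_, ?_⟩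
  · intro h
    have huw : u * (c * v * c⁻¹) = c * t * c⁻¹ := by
      rw [← hcu]; rw [htdef]; group
    rw [h] at huw
    have hct : c * t ^ n * c⁻¹ = u * v := by
      have ht' : t ^ n = u * j := by rw [hjdef, ← mul_assoc, inv_sq hu, one_mul]
      rw [ht', show c * (u * j) * c⁻¹ = (c * u * c⁻¹) * (c * j * c⁻¹) by group, hcu, hcj]
    have h2 := conj_pow' c t n
    rw [← huw, inv_sq hu] at h2
    rw [hct] at h2
    rw [one_pow] at h2
    rw [← htdef] at h2
    rw [← h2] at ht0
    rw [orderOf_one] at ht0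
    omega
  · have huw : u * (c * v * c⁻¹) = c * t * c⁻¹ := by
      rw [← hcu]; rw [htdef]; group
    have ht' : t ^ n = u * j := by rw [hjdef, ← mul_assoc, inv_sq hu, one_mul]
    have hct : c * t ^ n * c⁻¹ = u * v := by
      rw [ht', show c * (u * j) * c⁻¹ = (c * u * c⁻¹) * (c * j * c⁻¹) by group, hcu, hcj]
    rw [huw, conj_pow' c t n, hct]

end Action

end Stmt15Aux


/-! ### Dihedral machinery -/

namespace Stmt15Aux

open Subgroup

section Dihedral
variable {G : Type*} [Group G]

/-- The homomorphism from the infinite dihedral group sending `r 1` to `t` and `sr 0` to `u`. -/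
def dihHom (u t : G) (hu2 : u * u = 1) (hut : u * t * u = t⁻¹) : DihedralGroup 0 →* G where
  toFun x :=
    match x with
    | .r i => t ^ (show ℤ from i)
    | .sr i => u * t ^ (show ℤ from i)
  map_one' := by
    show t ^ (0 : ℤ) = 1
    exact zpow_zero t
  map_mul' := by
    have hc : ∀ z : ℤ, t ^ z * u = u * t ^ (-z) := by
      intro z
      have h := conj_zpow_of hu2 hut z
      calc t ^ z * u = u * (u * t ^ z * u) := by
            rw [← mul_assoc, ← mul_assoc, hu2, one_mul]
        _ = u * t ^ (-z) := by rw [h]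
    rintro (i | i) (j | j)
    · show t ^ (show ℤ from i + j) = t ^ (show ℤ from i) * t ^ (show ℤ from j)
      exact zpow_add t _ _
    · show u * t ^ (show ℤ from j - i) = t ^ (show ℤ from i) * (u * t ^ (show ℤ from j))
      rw [← mul_assoc, hc, mul_assoc, ← zpow_add, neg_add_eq_sub]
      rfl
    · show u * t ^ (show ℤ from i + j) = (u * t ^ (show ℤ from i)) * t ^ (show ℤ from j)
      rw [mul_assoc, ← zpow_add]
      rfl
    · show t ^ (show ℤ from j - i) = (u * t ^ (show ℤ from i)) * (u * t ^ (show ℤ from j))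
      rw [← mul_assoc, mul_assoc u, hc, ← mul_assoc, hu2, one_mul, ← zpow_add,
        neg_add_eq_sub]
      rfl

@[simp] theorem dihHom_r (u t : G) (hu2 : u * u = 1) (hut : u * t * u = t⁻¹) (i : ZMod 0) :
    dihHom u t hu2 hut (.r i) = t ^ (show ℤ from i) := rfl

@[simp] theorem dihHom_sr (u t : G) (hu2 : u * u = 1) (hut : u * t * u = t⁻¹) (i : ZMod 0) :
    dihHom u t hu2 hut (.sr i) = u * t ^ (show ℤ from i) := rfl

theorem dihHom_injective (u t : G) (hu2 : u * u = 1) (hu1 : u ≠ 1)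
    (hut : u * t * u = t⁻¹) (ht0 : orderOf t = 0) :
    Function.Injective (dihHom u t hu2 hut) := by
  rw [injective_iff_map_eq_one]
  rintro (i | i) h
  · rw [dihHom_r] at h
    have h0 := (zpow_eq_one_iff0 ht0).mp h
    rw [DihedralGroup.one_def]
    exact congrArg DihedralGroup.r h0
  · rw [dihHom_sr] at h
    exfalso
    have h2 : u = t ^ (-(show ℤ from i)) := by
      rw [zpow_neg]
      exact eq_inv_of_mul_eq_one_left h
    exact ne_zpow_of hu2 hu1 ht0 _ h2

theorem dihHom_range (u t : G) (hu2 : u * u = 1) (hut : u * t * u = t⁻¹) :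
    (dihHom u t hu2 hut).range = closure {u, u * t} := by
  have humem : u ∈ closure {u, u * t} := subset_closure (by simp)
  have htmem : t ∈ closure {u, u * t} := by
    have h := mul_mem humem (subset_closure (show u * t ∈ ({u, u * t} : Set G) by simp))
    rwa [← mul_assoc, hu2, one_mul] at h
  apply le_antisymm
  · rintro g ⟨x, rfl⟩
    rcases x with i | i
    · rw [dihHom_r]
      exact zpow_mem htmem _
    · rw [dihHom_sr]
      exact mul_mem humem (zpow_mem htmem _)
  · rw [closure_le]
    have h1 : u ∈ (dihHom u t hu2 hut).range :=
      ⟨.sr 0, by rw [dihHom_sr]; show u * t ^ (0:ℤ) = u; rw [zpow_zero, mul_one]⟩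
    have h2 : u * t ∈ (dihHom u t hu2 hut).range :=
      ⟨.sr 1, by rw [dihHom_sr]; show u * t ^ (1:ℤ) = u * t; rw [zpow_one]⟩
    intro g hg
    simp only [Set.mem_insert_iff, Set.mem_singleton_iff] at hg
    rcases hg with h | h
    · rw [h]; exact h1
    · rw [h]; exact h2

/-- The projection from the infinite dihedral group onto the dihedral group of order `2n`. -/
def dihProj (n : ℕ) : DihedralGroup 0 →* DihedralGroup n where
  toFun x :=
    match x with
    | .r i => .r ((show ℤ from i : ℤ) : ZMod n)
    | .sr i => .sr ((show ℤ from i : ℤ) : ZMod n)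
  map_one' := by
    show DihedralGroup.r (((0:ℤ) : ZMod n)) = 1
    rw [DihedralGroup.one_def, Int.cast_zero]
  map_mul' := by
    rintro (i | i) (j | j)
    · show DihedralGroup.r (((show ℤ from i + j : ℤ)) : ZMod n) = DihedralGroup.r _ * DihedralGroup.r _
      rw [DihedralGroup.r_mul_r]
      exact congrArg DihedralGroup.r (Int.cast_add _ _)
    · show DihedralGroup.sr (((show ℤ from j - i : ℤ)) : ZMod n) = DihedralGroup.r _ * DihedralGroup.sr _
      rw [DihedralGroup.r_mul_sr]
      exact congrArg DihedralGroup.sr (Int.cast_sub _ _)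
    · show DihedralGroup.sr (((show ℤ from i + j : ℤ)) : ZMod n) = DihedralGroup.sr _ * DihedralGroup.r _
      rw [DihedralGroup.sr_mul_r]
      exact congrArg DihedralGroup.sr (Int.cast_add _ _)
    · show DihedralGroup.r (((show ℤ from j - i : ℤ)) : ZMod n) = DihedralGroup.sr _ * DihedralGroup.sr _
      rw [DihedralGroup.sr_mul_sr]
      exact congrArg DihedralGroup.r (Int.cast_sub _ _)

@[simp] theorem dihProj_r (n : ℕ) (i : ZMod 0) :
    dihProj n (.r i) = .r (((show ℤ from i) : ℤ) : ZMod n) := rfl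

@[simp] theorem dihProj_sr (n : ℕ) (i : ZMod 0) :
    dihProj n (.sr i) = .sr (((show ℤ from i) : ℤ) : ZMod n) := rfl

theorem dihProj_surjective (n : ℕ) : Function.Surjective (dihProj n) := by
  rintro (k | k)
  · obtain ⟨i, hi⟩ := ZMod.intCast_surjective (n := n) k
    exact ⟨.r (show ZMod 0 from i), by rw [dihProj_r]; rw [show ((show ℤ from (show ZMod 0 from i)) : ℤ) = i from rfl, hi]⟩
  · obtain ⟨i, hi⟩ := ZMod.intCast_surjective (n := n) k
    exact ⟨.sr (show ZMod 0 from i), by rw [dihProj_sr]; rw [show ((show ℤ from (show ZMod 0 from i)) : ℤ) = i from rfl, hi]⟩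

theorem sr0_zpow (n : ℕ) (k : ℤ) :
    (DihedralGroup.sr (0 : ZMod n)) ^ k = 1 ∨
      (DihedralGroup.sr (0 : ZMod n)) ^ k = DihedralGroup.sr 0 := by
  have h2 : (DihedralGroup.sr (0 : ZMod n)) ^ (2 : ℤ) = 1 := by
    rw [show (2:ℤ) = 1 + 1 from rfl, zpow_add, zpow_one, DihedralGroup.sr_mul_sr,
      sub_zero, DihedralGroup.one_def]
  rcases Int.even_or_odd k with ⟨m, rfl⟩ | ⟨m, rfl⟩
  · left
    rw [show m + m = 2 * m by ring, zpow_mul, h2, one_zpow]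
  · right
    rw [zpow_add, zpow_mul, h2, one_zpow, one_mul, zpow_one]

theorem r_mem_zpowers_sr0 {n : ℕ} (c : ZMod n) :
    DihedralGroup.r c ∈ zpowers (DihedralGroup.sr (0 : ZMod n)) ↔ c = 0 := by
  constructor
  · intro hmem
    rw [Subgroup.mem_zpowers_iff] at hmem
    obtain ⟨k, hk⟩ := hmem
    rcases sr0_zpow n k with h | h <;> rw [h] at hk
    · rw [DihedralGroup.one_def] at hk
      exact ((DihedralGroup.r.injEq _ _).mp hk).symm
    · exact absurd hk (by simp)
  · rintro rfl
    rw [show DihedralGroup.r (0 : ZMod n) = 1 from (DihedralGroup.one_def).symm]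
    exact one_mem _

theorem sr_mem_zpowers_sr0 {n : ℕ} (c : ZMod n) :
    DihedralGroup.sr c ∈ zpowers (DihedralGroup.sr (0 : ZMod n)) ↔ c = 0 := by
  constructor
  · intro hmem
    rw [Subgroup.mem_zpowers_iff] at hmem
    obtain ⟨k, hk⟩ := hmem
    rcases sr0_zpow n k with h | h <;> rw [h] at hk
    · rw [DihedralGroup.one_def] at hk
      cases hk
    · exact ((DihedralGroup.sr.injEq _ _).mp hk).symm
  · rintro rfl
    exact Subgroup.mem_zpowers _

theorem index_zpowers_sr0 (n : ℕ) (hn : 2 ≤ n) :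
    (zpowers (DihedralGroup.sr (0 : ZMod n))).index = n := by
  haveI : NeZero n := ⟨by omega⟩
  have h1 := Subgroup.card_mul_index (zpowers (DihedralGroup.sr (0 : ZMod n)))
  rw [Nat.card_zpowers, DihedralGroup.orderOf_sr, Nat.card_eq_fintype_card,
    DihedralGroup.card] at h1
  omega

/-- The key index computation for the chain. -/
theorem chain_relindex (u t t' : G) (hu2 : u * u = 1) (hu1 : u ≠ 1)
    (hut : u * t * u = t⁻¹) (hut' : u * t' * u = t'⁻¹) (ht0 : orderOf t = 0)
    {n : ℕ} (hn : 2 ≤ n) (htt' : t ^ n = t') :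
    (closure {u, u * t'}).relIndex (closure {u, u * t}) = n := by
  haveI : NeZero n := ⟨by omega⟩
  have hrange := dihHom_range u t hu2 hut
  have hrange' := dihHom_range u t' hu2 hut'
  have ht'mem : t' ∈ closure {u, u * t'} := by
    have h := mul_mem (subset_closure (show u ∈ ({u, u * t'} : Set G) by simp))
      (subset_closure (show u * t' ∈ ({u, u * t'} : Set G) by simp))
    rwa [← mul_assoc, hu2, one_mul] at h
  have hpowt : ∀ k : ℤ, t ^ ((n : ℤ) * k) = t' ^ k := by
    intro k
    rw [zpow_mul, zpow_natCast, htt']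
  have memr : ∀ i : ℤ, t ^ i ∈ closure {u, u * t'} ↔ (n : ℤ) ∣ i := by
    intro i
    constructor
    · intro hmem
      rw [← hrange'] at hmem
      obtain ⟨y, hy⟩ := hmem
      rcases y with k | k
      · rw [dihHom_r] at hy
        rw [← hpowt] at hy
        exact ⟨_, (zpow_inj_of ht0 hy).symm⟩
      · exfalso
        rw [dihHom_sr] at hy
        have h2 : u = t ^ (i - (n : ℤ) * (show ℤ from k)) := by
          have h3 : u = t ^ i * (t' ^ (show ℤ from k))⁻¹ := by
            rw [← hy]; group
          rw [← hpowt, ← zpow_neg, ← zpow_add, ← sub_eq_add_neg] at h3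
          exact h3
        exact ne_zpow_of hu2 hu1 ht0 _ h2
    · rintro ⟨k, rfl⟩
      rw [hpowt]
      exact zpow_mem ht'mem _
  have memsr : ∀ i : ℤ, u * t ^ i ∈ closure {u, u * t'} ↔ (n : ℤ) ∣ i := by
    intro i
    constructor
    · intro hmem
      rw [← hrange'] at hmem
      obtain ⟨y, hy⟩ := hmem
      rcases y with k | k
      · exfalso
        rw [dihHom_r] at hy
        have h2 : u = t ^ ((n : ℤ) * (show ℤ from k) - i) := by
          have h3 : u = t' ^ (show ℤ from k) * (t ^ i)⁻¹ := by
            rw [hy]; group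
          rw [← hpowt, ← zpow_neg, ← zpow_add, ← sub_eq_add_neg] at h3
          exact h3
        exact ne_zpow_of hu2 hu1 ht0 _ h2
      · rw [dihHom_sr] at hy
        have h4 : t' ^ (show ℤ from k) = t ^ i := mul_left_cancel hy
        rw [← hpowt] at h4
        exact ⟨_, (zpow_inj_of ht0 h4).symm⟩
    · rintro ⟨k, rfl⟩
      rw [hpowt]
      exact mul_mem (subset_closure (by simp)) (zpow_mem ht'mem _)
  rw [← hrange, ← Subgroup.index_comap]
  have hcomap : Subgroup.comap (dihHom u t hu2 hut) (closure {u, u * t'}) =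
      Subgroup.comap (dihProj n) (zpowers (DihedralGroup.sr (0 : ZMod n))) := by
    ext x
    rcases x with i | i
    · rw [Subgroup.mem_comap, Subgroup.mem_comap, dihHom_r, dihProj_r,
        r_mem_zpowers_sr0, memr, ZMod.intCast_zmod_eq_zero_iff_dvd]
    · rw [Subgroup.mem_comap, Subgroup.mem_comap, dihHom_sr, dihProj_sr,
        sr_mem_zpowers_sr0, memsr, ZMod.intCast_zmod_eq_zero_iff_dvd]
  rw [hcomap, Subgroup.index_comap_of_surjective _ (dihProj_surjective n),
    index_zpowers_sr0 n hn]

end Dihedral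

end Stmt15Aux


/-! ### Embedding of `D_ℚ` -/

namespace Stmt15Aux

open Subgroup

section DQEmbed
variable {G : Type*} [Group G]

theorem rat_mul_factorial (q : ℚ) (m : ℕ) (hdvd : q.den ∣ m.factorial) :
    (q * (m.factorial : ℚ)) = (((q.num * ((m.factorial / q.den : ℕ) : ℤ)) : ℤ) : ℚ) := by
  have hden0 : ((q.den : ℚ)) ≠ 0 := by
    exact_mod_cast (Rat.den_pos q).ne'
  have h1 : ((m.factorial / q.den : ℕ) : ℚ) = (m.factorial : ℚ) / (q.den : ℚ) :=
    Nat.cast_div hdvd hden0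
  have h2 : (((q.num * ((m.factorial / q.den : ℕ) : ℤ)) : ℤ) : ℚ)
      = (q.num : ℚ) * ((m.factorial : ℚ) / (q.den : ℚ)) := by
    rw [Int.cast_mul, Int.cast_natCast, h1]
  rw [h2]
  conv_lhs => rw [← Rat.num_div_den q]
  ring

theorem dq_embed (u : G) (ts : ℕ → G) (hu2 : u * u = 1) (hu1 : u ≠ 1)
    (hut : ∀ n, 1 ≤ n → u * ts n * u = (ts n)⁻¹)
    (ht0 : ∀ n, 1 ≤ n → orderOf (ts n) = 0)
    (hchain : ∀ n, 1 ≤ n → (ts (n + 1)) ^ (n + 1) = ts n) :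
    ∃ D : Subgroup G, u ∈ D ∧ ts 1 ∈ D ∧ Nonempty (D ≃* DQ) := by
  classical
  -- powers of later terms give earlier terms
  have tfac : ∀ n, 1 ≤ n → ∀ m, n ≤ m → ts n = ts m ^ (m.factorial / n.factorial) := by
    intro n hn m hm
    induction m, hm using Nat.le_induction with
    | base => rw [Nat.div_self (Nat.factorial_pos n), pow_one]
    | succ m hm ih =>
        have hdvd : n.factorial ∣ m.factorial := Nat.factorial_dvd_factorial hm
        have h1 : (m + 1).factorial / n.factorial = (m + 1) * (m.factorial / n.factorial) := by
          rw [Nat.factorial_succ, Nat.mul_div_assoc _ hdvd]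
        rw [h1, pow_mul, hchain m (le_trans hn hm)]
        exact ih
  set Tf : ℚ → G := fun q => ts q.den ^ (q.num * (((q.den - 1).factorial : ℕ) : ℤ)) with hTf
  -- the key well-definedness lemma
  have key : ∀ (q : ℚ) (n : ℕ), 1 ≤ n → ∀ z : ℤ,
      (q * (n.factorial : ℚ)) = (z : ℚ) → Tf q = ts n ^ z := by
    intro q n hn z hz
    have hd1 : 1 ≤ q.den := Rat.den_pos q
    set d := q.den with hd
    set M := max d n with hM
    have hdM : d ≤ M := le_max_left _ _
    have hnM : n ≤ M := le_max_right _ _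
    set A := M.factorial / d.factorial with hA
    set B := M.factorial / n.factorial with hB
    have hAd : A * d.factorial = M.factorial :=
      Nat.div_mul_cancel (Nat.factorial_dvd_factorial hdM)
    have hBn : B * n.factorial = M.factorial :=
      Nat.div_mul_cancel (Nat.factorial_dvd_factorial hnM)
    have hnum : (q.num : ℚ) = q * d := by
      have h := Rat.num_div_den q
      rw [div_eq_iff (show ((q.den : ℚ)) ≠ 0 from by exact_mod_cast (Rat.den_pos q).ne')] at h
      exact h
    have hzd : z * (d : ℤ) = q.num * (n.factorial : ℤ) := by
      have hq : (z : ℚ) * (d : ℚ) = (q.num : ℚ) * ((n.factorial : ℕ) : ℚ) := by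
        rw [← hz, hnum]
        ring
      exact_mod_cast hq
    show ts d ^ (q.num * (((d - 1).factorial : ℕ) : ℤ)) = ts n ^ z
    rw [tfac d hd1 M hdM, tfac n hn M hnM, ← zpow_natCast (ts M) A, ← zpow_mul,
      ← zpow_natCast (ts M) B, ← zpow_mul]
    congr 1
    have hAc : (A : ℤ) * (d.factorial : ℤ) = (M.factorial : ℤ) := by exact_mod_cast hAd
    have hBc : (B : ℤ) * (n.factorial : ℤ) = (M.factorial : ℤ) := by exact_mod_cast hBn
    have hDc : (d : ℤ) * (((d - 1).factorial : ℕ) : ℤ) = (d.factorial : ℤ) := by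
      exact_mod_cast Nat.mul_factorial_pred (by omega : d ≠ 0)
    have hdne : (d : ℤ) ≠ 0 := by
      have : (0:ℕ) < d := hd1
      omega
    apply mul_right_cancel₀ hdne
    calc (A : ℤ) * (q.num * (((d - 1).factorial : ℕ) : ℤ)) * (d : ℤ)
        = q.num * ((A : ℤ) * ((d : ℤ) * (((d - 1).factorial : ℕ) : ℤ))) := by ring
      _ = q.num * ((A : ℤ) * (d.factorial : ℤ)) := by rw [hDc]
      _ = q.num * (M.factorial : ℤ) := by rw [hAc]
      _ = q.num * ((B : ℤ) * (n.factorial : ℤ)) := by rw [hBc]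
      _ = (B : ℤ) * (q.num * (n.factorial : ℤ)) := by ring
      _ = (B : ℤ) * (z * (d : ℤ)) := by rw [hzd]
      _ = (B : ℤ) * z * (d : ℤ) := by ring
  -- additivity
  have hTadd : ∀ q₁ q₂ : ℚ, Tf (q₁ + q₂) = Tf q₁ * Tf q₂ := by
    intro q₁ q₂
    obtain ⟨n, hn1, hd1, hd2, hd3⟩ : ∃ n : ℕ, 1 ≤ n ∧ q₁.den ∣ n.factorial ∧
        q₂.den ∣ n.factorial ∧ (q₁ + q₂).den ∣ n.factorial := by
      have hp : 0 < q₁.den * q₂.den * (q₁ + q₂).den :=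
        Nat.mul_pos (Nat.mul_pos (Rat.den_pos q₁) (Rat.den_pos q₂)) (Rat.den_pos (q₁ + q₂))
      have hnn : (q₁.den * q₂.den * (q₁ + q₂).den) ∣
          (q₁.den * q₂.den * (q₁ + q₂).den).factorial := Nat.dvd_factorial hp le_rfl
      exact ⟨_, hp, dvd_trans (dvd_mul_of_dvd_left (dvd_mul_right _ _) _) hnn,
        dvd_trans (dvd_mul_of_dvd_left (dvd_mul_left _ _) _) hnn,
        dvd_trans (dvd_mul_left _ _) hnn⟩
    set z₁ : ℤ := q₁.num * ((n.factorial / q₁.den : ℕ) : ℤ) with hz₁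
    set z₂ : ℤ := q₂.num * ((n.factorial / q₂.den : ℕ) : ℤ) with hz₂
    have hk1 : Tf q₁ = ts n ^ z₁ := key q₁ n hn1 z₁ (rat_mul_factorial q₁ n hd1)
    have hk2 : Tf q₂ = ts n ^ z₂ := key q₂ n hn1 z₂ (rat_mul_factorial q₂ n hd2)
    have hk3 : Tf (q₁ + q₂) = ts n ^ (z₁ + z₂) := by
      apply key (q₁ + q₂) n hn1
      push_cast
      rw [← rat_mul_factorial q₁ n hd1, ← rat_mul_factorial q₂ n hd2]
      ring
    rw [hk1, hk2, hk3, zpow_add]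
  -- compatibility with conjugation by u
  have hTneg : ∀ q : ℚ, Tf (-q) = u * Tf q * u := by
    intro q
    have hd1 : 1 ≤ q.den := Rat.den_pos q
    have hdd : q.den ∣ q.den.factorial := Nat.dvd_factorial hd1 le_rfl
    set z : ℤ := q.num * ((q.den.factorial / q.den : ℕ) : ℤ) with hzdef
    have hk : Tf q = ts q.den ^ z := key q q.den hd1 z (rat_mul_factorial q q.den hdd)
    have hkneg : Tf (-q) = ts q.den ^ (-z) := by
      apply key (-q) q.den hd1
      push_cast
      rw [← rat_mul_factorial q q.den hdd]
      ring
    rw [hk, hkneg, ← conj_zpow_of hu2 (hut q.den hd1) z]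
  have hT1 : Tf 0 = 1 := by
    have h := key 0 1 le_rfl 0 (by norm_num)
    rw [h, zpow_zero]
  have hTone : Tf 1 = ts 1 := by
    have h := key 1 1 le_rfl 1 (by norm_num)
    rw [h, zpow_one]
  -- the homomorphism from Multiplicative ℚ
  set T : Multiplicative ℚ →* G :=
    { toFun := fun x => Tf (Multiplicative.toAdd x)
      map_one' := hT1
      map_mul' := fun x y => hTadd (Multiplicative.toAdd x) (Multiplicative.toAdd y) }
    with hT
  -- the homomorphism from ℤˣ
  have hm1ne : ((-1 : ℤˣ)) ≠ 1 := by decide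
  set U : ℤˣ →* G :=
    { toFun := fun ε => if ε = 1 then 1 else u
      map_one' := if_pos rfl
      map_mul' := by
        intro a b
        rcases Int.units_eq_one_or a with rfl | rfl <;>
          rcases Int.units_eq_one_or b with rfl | rfl <;>
          simp [hm1ne, hu2] }
    with hU
  have hUm1 : U (-1) = u := by
    show (if (-1 : ℤˣ) = 1 then 1 else u) = u
    rw [if_neg hm1ne]
  have hUinv : ∀ ε : ℤˣ, (U ε)⁻¹ = U ε := by
    intro ε
    rcases Int.units_eq_one_or ε with rfl | rfl
    · rw [map_one, inv_one]
    · rw [hUm1]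
      exact inv_eq_of_mul_eq_one_right hu2
  have hdqm1 : ∀ x : Multiplicative ℚ,
      (dqAut (-1)) x = Multiplicative.ofAdd (-(Multiplicative.toAdd x)) := by
    intro x
    show (addAutToMulAut ℚ) ((DistribMulAction.toAddAut ℤˣ ℚ) (-1)) x = _
    have : ((DistribMulAction.toAddAut ℤˣ ℚ) (-1)) (Multiplicative.toAdd x)
        = -(Multiplicative.toAdd x) := by
      show ((-1 : ℤˣ) • (Multiplicative.toAdd x) : ℚ) = _
      rw [Units.smul_def]
      norm_num
    calc (addAutToMulAut ℚ) ((DistribMulAction.toAddAut ℤˣ ℚ) (-1)) x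
        = Multiplicative.ofAdd (((DistribMulAction.toAddAut ℤˣ ℚ) (-1))
            (Multiplicative.toAdd x)) := rfl
      _ = Multiplicative.ofAdd (-(Multiplicative.toAdd x)) := by rw [this]
  have hcompat : ∀ ε : ℤˣ,
      T.comp (MulEquiv.toMonoidHom (dqAut ε))
        = (MulEquiv.toMonoidHom (MulAut.conj (U ε))).comp T := by
    intro ε
    ext x
    show T ((dqAut ε) x) = (MulAut.conj (U ε)) (T x)
    rcases Int.units_eq_one_or ε with rfl | rfl
    · rw [map_one dqAut, map_one U]
      show T x = (MulAut.conj 1) (T x)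
      rw [map_one MulAut.conj]
      rfl
    · rw [hdqm1 x, MulAut.conj_apply, hUm1]
      show Tf (-(Multiplicative.toAdd x)) = u * Tf (Multiplicative.toAdd x) * u⁻¹
      rw [inv_eq_of_mul_eq_one_right hu2]
      exact hTneg _
  set Φ : DQ →* G := SemidirectProduct.lift T U hcompat with hΦ
  have hΦinl : ∀ q : Multiplicative ℚ, Φ (SemidirectProduct.inl q) = Tf (Multiplicative.toAdd q) :=
    fun q => SemidirectProduct.lift_inl T U hcompat q
  have hΦinr : ∀ ε : ℤˣ, Φ (SemidirectProduct.inr ε) = U ε :=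
    fun ε => SemidirectProduct.lift_inr T U hcompat ε
  have hinj : Function.Injective Φ := by
    rw [injective_iff_map_eq_one]
    intro a ha
    obtain ⟨q, ε⟩ := a
    rw [SemidirectProduct.mk_eq_inl_mul_inr, map_mul, hΦinl, hΦinr] at ha
    have hnum_zero : ∀ qq : ℚ, Tf qq = 1 → qq = 0 := by
      intro qq hqq
      have hd1 : 1 ≤ qq.den := Rat.den_pos qq
      have hdd : qq.den ∣ qq.den.factorial := Nat.dvd_factorial hd1 le_rfl
      have hk := key qq qq.den hd1 _ (rat_mul_factorial qq qq.den hdd)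
      rw [hk] at hqq
      have hz0 := (zpow_eq_one_iff0 (ht0 _ hd1)).mp hqq
      have hfpos : 0 < qq.den.factorial / qq.den :=
        Nat.div_pos (Nat.le_of_dvd (Nat.factorial_pos _) hdd) hd1
      have hnum : qq.num = 0 := by
        rcases mul_eq_zero.mp hz0 with h | h
        · exact h
        · exfalso
          have : ((qq.den.factorial / qq.den : ℕ) : ℤ) ≠ 0 := by
            exact_mod_cast hfpos.ne'
          exact this h
      exact Rat.num_eq_zero.mp hnum
    rcases Int.units_eq_one_or ε with rfl | rfl
    · rw [map_one, mul_one] at ha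
      have hq0 := hnum_zero _ ha
      have hq1 : q = 1 := by
        have : Multiplicative.ofAdd (Multiplicative.toAdd q) = Multiplicative.ofAdd 0 := by
          rw [hq0]
        simpa using this
      rw [hq1]
      rfl
    · exfalso
      rw [hUm1] at ha
      have h2 : Tf (Multiplicative.toAdd q) = u⁻¹ := eq_inv_of_mul_eq_one_left ha
      rw [inv_eq_of_mul_eq_one_right hu2] at h2
      set qq := Multiplicative.toAdd q with hqq
      have hd1 : 1 ≤ qq.den := Rat.den_pos qq
      have hdd : qq.den ∣ qq.den.factorial := Nat.dvd_factorial hd1 le_rfl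
      have hk := key qq qq.den hd1 _ (rat_mul_factorial qq qq.den hdd)
      rw [hk] at h2
      exact ne_zpow_of hu2 hu1 (ht0 _ hd1) _ h2.symm
  refine ⟨Φ.range, ⟨SemidirectProduct.inr (-1), by rw [hΦinr, hUm1]⟩,
    ⟨SemidirectProduct.inl (Multiplicative.ofAdd 1), by rw [hΦinl]; simpa using hTone⟩,
    ⟨(MonoidHom.ofInjective hinj).symm⟩⟩

end DQEmbed

end Stmt15Aux

/-- In a sharply 2-transitive group of characteristic 0, any two distinct involutions `u, v`
generate a subgroup contained in a subgroup isomorphic to `D_ℚ = ℚ ⋊ ℤ/2ℤ`. More precisely,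
there is an increasing chain of subgroups `D₁ ⊆ D₂ ⊆ …` with `D₁ = ⟨u, v⟩`, each `Dₙ`
isomorphic to the infinite dihedral group (`DihedralGroup 0`), and `Dₙ₋₁` of index `n`
in `Dₙ` for every `n ≥ 2`. -/
theorem stmt_15 {G X : Type*} [Group G] [MulAction G X]
    (h2t : SharplyTwoTransitive G X) (hchar : ActionCharZero G X)
    (u v : G) (hu : IsInvolution u) (hv : IsInvolution v) (huv : u ≠ v) :
    (∃ D : Subgroup G, Subgroup.closure {u, v} ≤ D ∧ Nonempty (D ≃* DQ)) ∧
    ∃ D : ℕ → Subgroup G, D 1 = Subgroup.closure {u, v} ∧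
      (∀ n, 1 ≤ n → Nonempty (D n ≃* DihedralGroup 0)) ∧
      (∀ n, 1 ≤ n → D n ≤ D (n + 1)) ∧
      (∀ n, 2 ≤ n → (D (n - 1)).relIndex (D n) = n) := by
  classical
  have hu2 := Stmt15Aux.inv_sq hu
  have hu1 := Stmt15Aux.inv_ne_one hu
  have step : ∀ (k : ℕ) (g : G), IsInvolution g → g ≠ u →
      ∃ g' : G, (IsInvolution g' ∧ g' ≠ u) ∧ (u * g') ^ (k + 2) = u * g := by
    intro k g hg hgu
    obtain ⟨w', h1, h2, h3⟩ := Stmt15Aux.exists_root h2t hchar hu hg (Ne.symm hgu)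
      (n := k + 2) (by omega)
    exact ⟨w', ⟨h1, h2⟩, h3⟩
  choose F hF1 hF2 using step
  let S : ℕ → {g : G // IsInvolution g ∧ g ≠ u} := fun k =>
    Nat.rec (motive := fun _ => {g : G // IsInvolution g ∧ g ≠ u})
      ⟨v, hv, fun h => huv h.symm⟩
      (fun k ih => ⟨F k ih.1 ih.2.1 ih.2.2, hF1 k ih.1 ih.2.1 ih.2.2⟩) k
  have hS0 : (S 0).1 = v := rfl
  have hSsucc : ∀ k, (S (k + 1)).1 = F k (S k).1 (S k).2.1 (S k).2.2 := fun k => rfl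
  let ts : ℕ → G := fun n => u * (S (n - 1)).1
  have hWinv : ∀ n : ℕ, IsInvolution (S n).1 := fun n => (S n).2.1
  have hWne : ∀ n : ℕ, (S n).1 ≠ u := fun n => (S n).2.2
  have hts0 : ∀ n : ℕ, orderOf (ts n) = 0 := fun n =>
    hchar.2 u _ hu (hWinv _) (Ne.symm (hWne _))
  have htsinv : ∀ n : ℕ, u * ts n * u = (ts n)⁻¹ := fun n =>
    Stmt15Aux.conj_ut hu2 (Stmt15Aux.inv_sq (hWinv _))
  have htschain : ∀ n, 1 ≤ n → (ts (n + 1)) ^ (n + 1) = ts n := by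
    intro n hn
    show (u * (S ((n + 1) - 1)).1) ^ (n + 1) = u * (S (n - 1)).1
    have h1 : (n + 1) - 1 = (n - 1) + 1 := by omega
    rw [h1, hSsucc (n - 1)]
    have h := hF2 (n - 1) (S (n - 1)).1 (S (n - 1)).2.1 (S (n - 1)).2.2
    have h2 : (n - 1) + 2 = n + 1 := by omega
    rw [h2] at h
    exact h
  have hts1 : ts 1 = u * v := by show u * (S 0).1 = u * v; rw [hS0]
  constructor
  · obtain ⟨D, hDu, hDt, hiso⟩ := Stmt15Aux.dq_embed u ts hu2 hu1
      (fun n _ => htsinv n) (fun n _ => hts0 n) htschain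
    refine ⟨D, ?_, hiso⟩
    rw [Subgroup.closure_le]
    intro g hg
    simp only [Set.mem_insert_iff, Set.mem_singleton_iff] at hg
    rcases hg with h | h
    · rw [h]; exact hDu
    · rw [h]
      have hv' : v = u * ts 1 := by rw [hts1, ← mul_assoc, hu2, one_mul]
      rw [hv']
      exact mul_mem hDu hDt
  · refine ⟨fun n => Subgroup.closure {u, (S (n - 1)).1}, ?_, ?_, ?_, ?_⟩
    · show Subgroup.closure {u, (S 0).1} = _
      rw [hS0]
    · intro n hn
      have huts : u * ts n = (S (n - 1)).1 := by
        show u * (u * (S (n - 1)).1) = _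
        rw [← mul_assoc, hu2, one_mul]
      have hrange := Stmt15Aux.dihHom_range u (ts n) hu2 (htsinv n)
      rw [huts] at hrange
      have hinj := Stmt15Aux.dihHom_injective u (ts n) hu2 hu1 (htsinv n) (hts0 n)
      exact ⟨((MonoidHom.ofInjective hinj).trans (MulEquiv.subgroupCongr hrange)).symm⟩
    · intro n hn
      rw [Subgroup.closure_le]
      intro g hg
      simp only [Set.mem_insert_iff, Set.mem_singleton_iff] at hg
      have humem : u ∈ Subgroup.closure {u, (S ((n + 1) - 1)).1} :=
        Subgroup.subset_closure (by simp)
      have hwmem : (S ((n + 1) - 1)).1 ∈ Subgroup.closure {u, (S ((n + 1) - 1)).1} :=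
        Subgroup.subset_closure (by simp)
      have htmem : ts (n + 1) ∈ Subgroup.closure {u, (S ((n + 1) - 1)).1} :=
        mul_mem humem hwmem
      rcases hg with h | h
      · rw [h]; exact humem
      · rw [h]
        have hkey : (S (n - 1)).1 = u * (ts (n + 1)) ^ (n + 1) := by
          rw [htschain n hn]
          show _ = u * (u * (S (n - 1)).1)
          rw [← mul_assoc, hu2, one_mul]
        rw [hkey]
        exact mul_mem humem (pow_mem htmem _)
    · intro n hn
      have hch : (ts n) ^ n = ts (n - 1) := by
        have h := htschain (n - 1) (by omega)
        have h1 : (n - 1) + 1 = n := by omega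
        rw [h1] at h
        exact h
      have hres := Stmt15Aux.chain_relindex u (ts n) (ts (n - 1)) hu2 hu1
        (htsinv n) (htsinv (n - 1)) (hts0 n) hn hch
      have e1 : u * ts (n - 1) = (S ((n - 1) - 1)).1 := by
        show u * (u * _) = _
        rw [← mul_assoc, hu2, one_mul]
      have e2 : u * ts n = (S (n - 1)).1 := by
        show u * (u * _) = _
        rw [← mul_assoc, hu2, one_mul]
      rw [e1, e2] at hres
      exact hres
end
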